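/- Let F be a gauge on ℝ², F_a its associated gauge, and F_{a,a} = (F_a)_a the associated gauge of F_a. Then F_{a,a}(x) = F(-x) for every x ∈ ℝ². -/

import Mathlib

noncomputable section

/-- The determinant form `[x,y] = x₁y₂ − x₂y₁`. -/
def det2 (x y : ℝ × ℝ) : ℝ := x.1 * y.2 - x.2 * y.1

/-- A gauge (convex distance function) on ℝ². -/
def IsGauge (F : ℝ × ℝ → ℝ) : Prop :=
  (∀ x, 0 ≤ F x) ∧ (∀ x, F x = 0 ↔ x = 0) ∧
  (∀ (l : ℝ) (x : ℝ × ℝ), 0 < l → F (l • x) = l * F x) ∧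
  (∀ x y, F (x + y) ≤ F x + F y)

/-- The associated gauge `F_a(x) = sup {[y,x] : F(y) = 1}`. -/
def assocGauge (F : ℝ × ℝ → ℝ) (x : ℝ × ℝ) : ℝ :=
  sSup {d : ℝ | ∃ y, F y = 1 ∧ d = det2 y x}

lemma det2_swap_neg (z x : ℝ × ℝ) : det2 (-x) z = det2 z x := by
  simp [det2]; ring

/-- Upper bound: if `F_a z = 1` then `det2 z x ≤ F (-x)`. -/
lemma det2_le_of_assoc (F : ℝ × ℝ → ℝ) (hF : IsGauge F) {x : ℝ × ℝ} (hx : x ≠ 0)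
    {z : ℝ × ℝ} (hz : assocGauge F z = 1) : det2 z x ≤ F (-x) := by
  obtain ⟨hpos, hzero, hhom, _⟩ := hF
  have hnx : (-x) ≠ 0 := by simpa using hx
  have hFx : 0 < F (-x) := lt_of_le_of_ne (hpos _) (fun h => hnx ((hzero _).mp h.symm))
  set y₀ : ℝ × ℝ := (F (-x))⁻¹ • (-x) with hy₀
  have hFy₀ : F y₀ = 1 := by
    rw [hy₀, hhom _ _ (inv_pos.mpr hFx), inv_mul_cancel₀ hFx.ne']
  set S := {d : ℝ | ∃ y, F y = 1 ∧ d = det2 y z} with hS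
  by_cases hbdd : BddAbove S
  · have hmem : det2 y₀ z ∈ S := ⟨y₀, hFy₀, rfl⟩
    have h1 : det2 y₀ z ≤ 1 := hz ▸ le_csSup hbdd hmem
    have : det2 y₀ z = (F (-x))⁻¹ * det2 z x := by
      rw [hy₀, ← det2_swap_neg z x]; simp [det2]; ring
    rw [this] at h1
    calc det2 z x = F (-x) * ((F (-x))⁻¹ * det2 z x) := by
          field_simp
      _ ≤ F (-x) * 1 := by exact mul_le_mul_of_nonneg_left h1 hFx.le
      _ = F (-x) := by ring
  · exfalso
    have : assocGauge F z = 0 := Real.sSup_of_not_bddAbove hbdd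
    rw [hz] at this; norm_num at this

theorem assocGauge_assocGauge (F : ℝ × ℝ → ℝ) (hF : IsGauge F) :
    ∀ x : ℝ × ℝ, assocGauge (assocGauge F) x = F (-x) := by
  intro x
  obtain ⟨hpos, hzero, hhom, hadd⟩ := hF
  by_cases hx : x = 0
  · subst hx
    have hset : {d : ℝ | ∃ z, assocGauge F z = 1 ∧ d = det2 z 0} ⊆ {0} := by
      rintro d ⟨z, _, rfl⟩; simp [det2]
    have h0 : F (-(0 : ℝ × ℝ)) = 0 := (hzero _).mpr (by simp)
    rw [h0, assocGauge]
    rcases Set.subset_singleton_iff_eq.mp hset with h | h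
    · rw [h, Real.sSup_empty]
    · rw [h, csSup_singleton]
  · -- x ≠ 0
    have hF' : IsGauge F := ⟨hpos, hzero, hhom, hadd⟩
    have hnx : (-x) ≠ 0 := by simpa using hx
    have hFx : 0 < F (-x) := lt_of_le_of_ne (hpos _) (fun h => hnx ((hzero _).mp h.symm))
    set y₀ : ℝ × ℝ := (F (-x))⁻¹ • (-x) with hy₀
    have hy₀ne : y₀ ≠ 0 := by
      simpa [hy₀, smul_eq_zero, inv_eq_zero, hFx.ne'] using hx
    have hFy₀ : F y₀ = 1 := by
      rw [hy₀, hhom _ _ (inv_pos.mpr hFx), inv_mul_cancel₀ hFx.ne']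
    -- Hahn-Banach: supporting functional at y₀
    have Hdom : ∀ v : ((LinearPMap.mkSpanSingleton (K := ℝ) (σ := RingHom.id ℝ) y₀ (1:ℝ) hy₀ne)).domain,
        ((LinearPMap.mkSpanSingleton (K := ℝ) (σ := RingHom.id ℝ) y₀ (1:ℝ) hy₀ne)) v ≤ F v := by
      rintro ⟨v, hv⟩
      have hv' := hv
      rw [LinearPMap.domain_mkSpanSingleton] at hv'
      obtain ⟨t, ht⟩ := Submodule.mem_span_singleton.mp hv'
      have happ : ((LinearPMap.mkSpanSingleton (K := ℝ) (σ := RingHom.id ℝ) y₀ (1:ℝ) hy₀ne)) ⟨v, hv⟩ = t := by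
        have h2 : (⟨v, hv⟩ : ((LinearPMap.mkSpanSingleton (K := ℝ) (σ := RingHom.id ℝ) y₀ (1:ℝ) hy₀ne)).domain)
            = ⟨t • y₀, ht ▸ hv⟩ := by simp [ht.symm]
        rw [h2]
        have := LinearPMap.mkSpanSingleton'_apply y₀ (1:ℝ)
          (fun c hc => by simp [smul_eq_zero, hy₀ne] at hc ⊢; simp [hc]) t (ht ▸ hv)
        simpa [LinearPMap.mkSpanSingleton] using this
      rw [happ]
      rcases lt_trichotomy t 0 with h | h | h
      · exact le_trans h.le (by simpa using hpos v)
      · subst h; simp only [zero_smul] at ht; subst ht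
        simp [(hzero 0).mpr rfl]
      · have : F v = t := by rw [← ht] at *; rw [hhom _ _ h, hFy₀, mul_one]
        simp [this]
    obtain ⟨g, hg_ext, hg_le⟩ := exists_extension_of_le_sublinear
      ((LinearPMap.mkSpanSingleton (K := ℝ) (σ := RingHom.id ℝ) y₀ (1:ℝ) hy₀ne)) F
      (fun c hc v => hhom c v hc) hadd Hdom
    have hgy₀ : g y₀ = 1 := by
      have hmem : y₀ ∈ ((LinearPMap.mkSpanSingleton (K := ℝ) (σ := RingHom.id ℝ) y₀ (1:ℝ) hy₀ne)).domain := by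
        rw [LinearPMap.domain_mkSpanSingleton]; exact Submodule.mem_span_singleton_self y₀
      have := hg_ext ⟨y₀, hmem⟩
      rw [this]; exact LinearPMap.mkSpanSingleton'_apply_self _ _ _ _
    -- the supporting line z
    set z : ℝ × ℝ := (-(g (0,1)), g (1,0)) with hz
    have hdet_g : ∀ y : ℝ × ℝ, det2 y z = g y := by
      intro y
      have hy : y = y.1 • ((1:ℝ),(0:ℝ)) + y.2 • ((0:ℝ),(1:ℝ)) := by
        ext <;> simp
      have hgdecomp : g y = y.1 * g (1,0) + y.2 * g (0,1) := by
        conv_lhs => rw [hy]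
        rw [map_add, map_smul, map_smul, smul_eq_mul, smul_eq_mul]
      rw [hz, hgdecomp]; simp [det2]
    have hFaz : assocGauge F z = 1 := by
      apply le_antisymm
      · apply Real.sSup_le _ zero_le_one
        rintro d ⟨y, hy1, rfl⟩
        rw [hdet_g]
        exact le_trans (hg_le y) (le_of_eq hy1)
      · apply le_csSup
        · exact ⟨1, by rintro d ⟨y, hy1, rfl⟩; rw [hdet_g]; exact le_trans (hg_le y) (le_of_eq hy1)⟩
        · exact ⟨y₀, hFy₀, by rw [hdet_g, hgy₀]⟩
    have hdzx : det2 z x = F (-x) := by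
      rw [← det2_swap_neg z x, hdet_g]
      have : (-x) = F (-x) • y₀ := by
        rw [hy₀, smul_smul, mul_inv_cancel₀ hFx.ne', one_smul]
      conv_lhs => rw [this]
      rw [map_smul, hgy₀, smul_eq_mul, mul_one]
    -- conclude
    rw [assocGauge]
    apply le_antisymm
    · apply Real.sSup_le _ (hpos _)
      rintro d ⟨w, hw1, rfl⟩
      exact det2_le_of_assoc F hF' hx hw1
    · apply le_csSup
      · exact ⟨F (-x), by rintro d ⟨w, hw1, rfl⟩; exact det2_le_of_assoc F hF' hx hw1⟩
      · exact ⟨z, hFaz, hdzx.symm⟩
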